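/- Let 𝔪 be a non-degenerate graded nilpotent Lie algebra over a field of characteristic 0, and suppose d is a degree-preserving derivation with d(𝔪_{-i}) = 0 for i ≥ 2 and rank d = 1. Choose x ∈ 𝔪_{-1} with d(x) = y ≠ 0. Then d(y) = 0; in particular d² = 0, so d is nilpotent. -/
import Mathlib


open Module LinearMap

/-- if `d` is a degree-preserving derivation of a non-degenerate
GNLA vanishing on `𝔪_{-i}`, `i ≥ 2`, of rank 1, and `x ∈ 𝔪_{-1}` with
`d x = y ≠ 0`, then `d y = 0`; in particular `d² = 0`, so `d` is nilpotent. -/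
theorem stmt1 {k L : Type*} [Field k] [CharZero k] [LieRing L] [LieAlgebra k L]
    (m : ℕ → Submodule k L)
    (hsum : DirectSum.IsInternal fun i => m i)
    (h0 : m 0 = ⊥)
    (μ : ℕ) (hdepth : ∀ i, μ < i → m i = ⊥)
    (hbr : ∀ i j, ∀ x ∈ m i, ∀ y ∈ m j, ⁅x, y⁆ ∈ m (i + j))
    (hgen : ∀ i, 1 ≤ i →
      m (i + 1) = Submodule.span k {z | ∃ u ∈ m 1, ∃ v ∈ m i, ⁅u, v⁆ = z})
    (hnd : ∀ y ∈ m 1, (∀ z : L, ⁅y, z⁆ = 0) → y = 0)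
    (d : L →ₗ[k] L)
    (hder : ∀ a b : L, d ⁅a, b⁆ = ⁅d a, b⁆ + ⁅a, d b⁆)
    (hpres : ∀ i, ∀ x ∈ m i, d x ∈ m i)
    (hvan : ∀ i, 2 ≤ i → ∀ x ∈ m i, d x = 0)
    (hrk : finrank k (LinearMap.range d) = 1)
    (x y : L) (hx : x ∈ m 1) (hdx : d x = y) (hy : y ≠ 0) :
    d y = 0 ∧ d ∘ₗ d = 0 ∧ IsNilpotent d := by
  have hymem : y ∈ m 1 := hdx ▸ hpres 1 x hx
  have hyr : y ∈ LinearMap.range d := ⟨x, hdx⟩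
  have hfd : FiniteDimensional k (LinearMap.range d) :=
    Module.finite_of_finrank_pos (by rw [hrk]; norm_num)
  have hspan : LinearMap.range d = Submodule.span k {y} := by
    refine (Submodule.eq_of_le_of_finrank_le (Submodule.span_le.2 ?_) ?_).symm
    · simpa using hyr
    · rw [hrk, finrank_span_singleton hy]
  have hdall : ∀ a : L, ∃ c : k, d a = c • y := by
    intro a
    obtain ⟨c, hc⟩ := Submodule.mem_span_singleton.1 (hspan ▸ LinearMap.mem_range_self d a)
    exact ⟨c, hc.symm⟩
  obtain ⟨c, hc⟩ := hdall y
  have hc0 : c = 0 := by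
    by_contra hne
    have hpiece : ∀ i, ∀ z ∈ m i, ⁅y, z⁆ = 0 := by
      intro i z hz
      match i with
      | 0 => rw [h0] at hz; simp only [Submodule.mem_bot] at hz; simp [hz]
      | 1 =>
        obtain ⟨lam, hlam⟩ := hdall z
        have h2 : d ⁅y, z⁆ = 0 := hvan 2 le_rfl _ (hbr 1 1 y hymem z hz)
        rw [hder, hc, hlam, smul_lie, lie_smul, lie_self, smul_zero, add_zero] at h2
        exact (smul_eq_zero.1 h2).resolve_left hne
      | (n+2) =>
        have hdz : d z = 0 := hvan (n+2) (by omega) z hz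
        have h2 : d ⁅y, z⁆ = 0 := hvan (1 + (n+2)) (by omega) _ (hbr 1 (n+2) y hymem z hz)
        rw [hder, hc, hdz, lie_zero, add_zero, smul_lie] at h2
        exact (smul_eq_zero.1 h2).resolve_left hne
    have hker : ∀ z : L, ⁅y, z⁆ = 0 := by
      have htop : (⊤ : Submodule k L) ≤ LinearMap.ker (LieAlgebra.ad k L y) := by
        rw [← hsum.submodule_iSup_eq_top]
        exact iSup_le fun i z hz => by
          simpa [LieAlgebra.ad_apply, LinearMap.mem_ker] using hpiece i z hz
      intro z
      simpa [LieAlgebra.ad_apply, LinearMap.mem_ker] using htop (Submodule.mem_top (x := z))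
    exact hy (hnd y hymem hker)
  have hdy : d y = 0 := by rw [hc, hc0, zero_smul]
  have hdd : d ∘ₗ d = 0 := by
    ext a
    obtain ⟨ca, hca⟩ := hdall a
    simp [hca, hdy]
  exact ⟨hdy, hdd, ⟨2, by rw [pow_two, Module.End.mul_eq_comp, hdd]⟩⟩
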